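/- For n ≥ 3, the function w₂(r) = ((n²+5n+2)/12)·r satisfies w₂'(r) − G_n(r, w₂(r)) = ((n²+5n+2)/24)·(1 − w₂(r)²) ≥ 0 for all r ∈ (0, 12/(n²+5n+2)], i.e. w₂ is a super-solution of w' = G_n(r,w) on that interval. -/

import Mathlib

open Real

/-- The speed function `G_n(x,y)` for the harmonic-mean-type flow. -/
noncomputable def Gn (n : ℕ) (x y : ℝ) : ℝ :=
  (y / x) * (1 + y ^ 2) *
    (((n : ℝ) - y / x) / (y / x - ((n : ℝ) ^ 2 - 3 * n + 2) / 4))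

lemma aux_ne (n : ℕ) (hn : 3 ≤ n) :
    (n : ℝ) ^ 2 + 2 ≠ (7 : ℝ) * n := by
  have h : (n ^ 2 + 2 : ℕ) ≠ 7 * n := by
    rcases le_or_gt n 7 with h | h
    · interval_cases n <;> omega
    · nlinarith
  intro hc
  apply h
  have : ((n ^ 2 + 2 : ℕ) : ℝ) = ((7 * n : ℕ) : ℝ) := by push_cast; linarith
  exact_mod_cast this

/-- for `n ≥ 3`, `w₂(r) = ((n²+5n+2)/12) r` satisfies
`w₂'(r) − G_n(r,w₂(r)) = ((n²+5n+2)/24)·(1 − w₂(r)²) ≥ 0` for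
`r ∈ (0, 12/(n²+5n+2)]`, i.e. `w₂` is a super-solution there. -/
theorem stmt11 (n : ℕ) (hn : 3 ≤ n) (w₂ : ℝ → ℝ)
    (hw₂ : ∀ r, w₂ r = (((n : ℝ) ^ 2 + 5 * n + 2) / 12) * r) :
    ∀ r : ℝ, 0 < r → r ≤ 12 / ((n : ℝ) ^ 2 + 5 * n + 2) →
      deriv w₂ r - Gn n r (w₂ r) =
        (((n : ℝ) ^ 2 + 5 * n + 2) / 24) * (1 - (w₂ r) ^ 2) ∧
      0 ≤ deriv w₂ r - Gn n r (w₂ r) := by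
  intro r hr hr'
  set c : ℝ := ((n : ℝ) ^ 2 + 5 * n + 2) / 12 with hc
  have hn3 : (3 : ℝ) ≤ (n : ℝ) := by exact_mod_cast hn
  have hcpos : 0 < c := by positivity
  have hweq : w₂ = fun r => c * r := funext hw₂
  have hderiv : deriv w₂ r = c := by
    have h := ((hasDerivAt_id r).const_mul c).deriv
    rw [hweq]
    simpa using h
  have hdiv : w₂ r / r = c := by
    rw [hw₂, mul_div_assoc, div_self hr.ne', mul_one]
  have hden : c - ((n : ℝ) ^ 2 - 3 * n + 2) / 4 ≠ 0 := by
    have := aux_ne n hn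
    intro h
    apply this
    rw [hc] at h
    linarith [h]
  have hG : Gn n r (w₂ r) = (c / 2) * (1 + (w₂ r) ^ 2) := by
    unfold Gn
    rw [hdiv]
    have hnum : (n : ℝ) - c = ((-(n:ℝ)^2 + 7*n - 2) / 12) := by rw [hc]; ring
    have hden2 : c - ((n : ℝ) ^ 2 - 3 * n + 2) / 4 = ((-(n:ℝ)^2 + 7*n - 2) / 6) := by
      rw [hc]; ring
    have hne : ((-(n:ℝ)^2 + 7*n - 2)) ≠ 0 := by
      intro h
      exact hden (by rw [hden2, h]; norm_num)
    rw [hnum, hden2]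
    have hq : ((-(n:ℝ)^2 + 7*n - 2) / 12) / ((-(n:ℝ)^2 + 7*n - 2) / 6) = 1 / 2 := by
      have hx : ((-(n:ℝ)^2 + 7*n - 2) / 12) = (1 / 2) * ((-(n:ℝ)^2 + 7*n - 2) / 6) := by ring
      rw [hx, mul_div_assoc, div_self (div_ne_zero hne (by norm_num)), mul_one]
    rw [hq]
    ring
  have heq : deriv w₂ r - Gn n r (w₂ r) =
      (((n : ℝ) ^ 2 + 5 * n + 2) / 24) * (1 - (w₂ r) ^ 2) := by
    rw [hderiv, hG, hc]; ring
  refine ⟨heq, ?_⟩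
  rw [heq]
  have hw1 : w₂ r ≤ 1 := by
    rw [hw₂]
    have h12 : (0:ℝ) < (n : ℝ) ^ 2 + 5 * n + 2 := by positivity
    rw [div_mul_eq_mul_div, div_le_one (by norm_num : (0:ℝ) < 12)]
    calc ((n : ℝ) ^ 2 + 5 * n + 2) * r ≤ ((n : ℝ) ^ 2 + 5 * n + 2) * (12 / ((n : ℝ) ^ 2 + 5 * n + 2)) := by
          exact mul_le_mul_of_nonneg_left hr' h12.le
      _ = 12 := by field_simp
  have hw0 : 0 ≤ w₂ r := by rw [hw₂]; positivity
  have : (w₂ r) ^ 2 ≤ 1 := by nlinarith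
  nlinarith [sq_nonneg ((n:ℝ))]
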